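/- Let n ∈ ℕ, let d ∈ ℕ be even, and let ρ : ℝⁿ → [0,∞) be a nonnegative measurable kernel such that ∫_{ℝⁿ} y^α ρ(y) dy is finite for all multi-indices α ∈ ℕ₀ⁿ with |α| ≤ d. If p(x) = Σ_{i=1}^{k} (a_{i,0} + a_{i,1}x₁ + ⋯ + a_{i,n}xₙ)^d is a sum of d-th powers of affine linear forms, then the convolution (p ∗ ρ)(x) = ∫_{ℝⁿ} p(x−y) ρ(y) dy is again a sum of d-th powers of affine linear forms (with nonnegative scalar coefficients). -/

import Mathlib

open MeasureTheory

lemma pad_sum {M : Type*} [AddCommMonoid M] {c D : ℕ} (hc : c ≤ D) (F : Fin c → M) :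
    (∑ i : Fin D, if h : (i : ℕ) < c then F ⟨i, h⟩ else 0) = ∑ j : Fin c, F j := by
  classical
  set g : Fin D → M := fun i => if h : (i : ℕ) < c then F ⟨i, h⟩ else 0 with hg
  set T : Finset (Fin D) := (Finset.univ : Finset (Fin c)).map (Fin.castLEEmb hc) with hT
  have h1 : ∑ i ∈ T, g i = ∑ i : Fin D, g i := by
    apply Finset.sum_subset T.subset_univ
    intro i _ hi
    rw [hg]
    apply dif_neg
    intro h
    exact hi (by
      rw [hT, Finset.mem_map]
      exact ⟨⟨(i : ℕ), h⟩, Finset.mem_univ _, by simp [Fin.castLEEmb, Fin.castLE]⟩)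
  rw [← h1, hT, Finset.sum_map]
  apply Finset.sum_congr rfl
  intro j _
  simp [hg, Fin.castLEEmb, Fin.castLE]

theorem isCompact_convexHull' {V : Type*} [NormedAddCommGroup V] [NormedSpace ℝ V]
    [FiniteDimensional ℝ V] {K : Set V} (hK : IsCompact K) :
    IsCompact (convexHull ℝ K) := by
  classical
  rcases K.eq_empty_or_nonempty with rfl | ⟨k₀, hk₀⟩
  · simpa using isCompact_empty
  set D := Module.finrank ℝ V + 1 with hD
  set g : (Fin D → ℝ) × (Fin D → V) → V := fun wz => ∑ i, wz.1 i • wz.2 i with hgdef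
  have hgc : Continuous g := by
    apply continuous_finset_sum
    intro i _
    exact ((continuous_apply i).comp continuous_fst).smul
      ((continuous_apply i).comp continuous_snd)
  have hT : IsCompact ((stdSimplex ℝ (Fin D)) ×ˢ (Set.univ.pi fun _ : Fin D => K)) :=
    (isCompact_stdSimplex (𝕜 := ℝ) (ι := Fin D)).prod (isCompact_univ_pi fun _ => hK)
  have himg : g '' ((stdSimplex ℝ (Fin D)) ×ˢ (Set.univ.pi fun _ : Fin D => K))
      = convexHull ℝ K := by
    apply Set.Subset.antisymm
    · rintro - ⟨⟨w, z⟩, ⟨⟨hw0, hw1⟩, hz⟩, rfl⟩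
      exact mem_convexHull_of_exists_fintype w z hw0 hw1
        (fun i => hz i (Set.mem_univ i)) rfl
    · intro x hx
      obtain ⟨ι, hfin, z, w, hzs, hai, hw0, hw1, hx⟩ :=
        eq_pos_convex_span_of_mem_convexHull hx
      haveI := hfin
      obtain rfl : hfin = ‹Fintype ι› := Subsingleton.elim _ _
      have hcard : Fintype.card ι ≤ D := by
        calc Fintype.card ι ≤ Module.finrank ℝ ↥(vectorSpan ℝ (Set.range z)) + 1 :=
              hai.card_le_finrank_succ
        _ ≤ D := by
              rw [hD]
              exact Nat.add_le_add_right (Submodule.finrank_le _) 1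
      set e := Fintype.equivFin ι with he
      set w' : Fin D → ℝ :=
        fun i => if h : (i : ℕ) < Fintype.card ι then w (e.symm ⟨i, h⟩) else 0 with hw'
      set z' : Fin D → V :=
        fun i => if h : (i : ℕ) < Fintype.card ι then z (e.symm ⟨i, h⟩) else k₀ with hz'
      have hmem1 : w' ∈ stdSimplex ℝ (Fin D) := by
        constructor
        · intro i
          rw [hw']
          dsimp only
          split
          · exact (hw0 _).le
          · exact le_refl 0
        · rw [hw']
          dsimp only
          rw [pad_sum hcard (fun j => w (e.symm j)), Equiv.sum_comp e.symm w, hw1]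
      have hmem2 : z' ∈ Set.univ.pi fun _ : Fin D => K := by
        intro i _
        rw [hz']
        dsimp only
        split
        · exact hzs (Set.mem_range_self _)
        · exact hk₀
      refine ⟨(w', z'), ⟨hmem1, hmem2⟩, ?_⟩
      rw [hgdef]
      dsimp only
      have hpt : ∀ i : Fin D, w' i • z' i
          = if h : (i : ℕ) < Fintype.card ι
            then w (e.symm ⟨i, h⟩) • z (e.symm ⟨i, h⟩) else 0 := by
        intro i
        rw [hw', hz']
        dsimp only
        split
        · rfl
        · rw [zero_smul]
      calc (∑ i, w' i • z' i)
          = ∑ i : Fin D, if h : (i : ℕ) < Fintype.card ι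
              then w (e.symm ⟨i, h⟩) • z (e.symm ⟨i, h⟩) else 0 :=
            Finset.sum_congr rfl fun i _ => hpt i
        _ = ∑ j : Fin (Fintype.card ι), w (e.symm j) • z (e.symm j) :=
            pad_sum hcard (fun j => w (e.symm j) • z (e.symm j))
        _ = ∑ i : ι, w i • z i := Equiv.sum_comp e.symm (fun i => w i • z i)
        _ = x := hx
  rw [← himg]
  exact hT.image hgc

section Cone
variable (d : ℕ)

/-- coefficient vector of `(z.1 + z.2 * t)^d` as polynomial in `t` -/
noncomputable def psiW (z : ℝ × ℝ) : Fin (d+1) → ℝ :=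
  fun s => (d.choose s) * z.1 ^ (d - (s : ℕ)) * z.2 ^ (s : ℕ)

/-- generators: psiW of the unit circle -/
noncomputable def coneK : Set (Fin (d+1) → ℝ) := psiW d '' Metric.sphere (0 : ℝ × ℝ) 1

/-- the closed cone -/
noncomputable def coneS : Set (Fin (d+1) → ℝ) :=
  {w | ∃ r : ℝ, 0 ≤ r ∧ ∃ v ∈ convexHull ℝ (coneK d), w = r • v}

lemma psiW_eval (z : ℝ × ℝ) (t : ℝ) :
    ∑ s : Fin (d+1), psiW d z s * t ^ (s : ℕ) = (z.1 + z.2 * t) ^ d := by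
  have h2 : ∑ s : Fin (d+1), psiW d z s * t ^ (s:ℕ)
      = ∑ s ∈ Finset.range (d+1), (z.2*t)^s * z.1^(d-s) * (d.choose s) := by
    rw [← Fin.sum_univ_eq_sum_range (fun s => (z.2*t)^s * z.1^(d-s) * (d.choose s)) (d+1)]
    apply Finset.sum_congr rfl
    intro s _
    rw [psiW, mul_pow]
    ring
  rw [h2, ← add_pow]
  ring

lemma psiW_smul (r : ℝ) (z : ℝ × ℝ) : psiW d (r • z) = r ^ d • psiW d z := by
  funext s
  have hs : (s : ℕ) ≤ d := Nat.lt_succ_iff.mp s.isLt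
  have : r ^ (d - (s:ℕ)) * r ^ (s:ℕ) = r ^ d := by
    rw [← pow_add, Nat.sub_add_cancel hs]
  simp only [psiW, Prod.smul_fst, Prod.smul_snd, smul_eq_mul, Pi.smul_apply, mul_pow]
  rw [← this]
  ring

lemma psiW_zero (hd0 : 0 < d) : psiW d (0 : ℝ × ℝ) = 0 := by
  funext s
  rcases Nat.eq_zero_or_pos (s : ℕ) with h | h
  · have : 0 < d - (s : ℕ) := by omega
    simp [psiW, zero_pow this.ne']
  · simp [psiW, zero_pow h.ne']

lemma psiW_mem_coneS (hd0 : 0 < d) (z : ℝ × ℝ) : psiW d z ∈ coneS d := by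
  rcases eq_or_ne z 0 with rfl | hz
  · refine ⟨0, le_refl 0, psiW d (1, 0), ?_, ?_⟩
    · exact subset_convexHull ℝ _ ⟨(1,0), by simp [Prod.norm_def], rfl⟩
    · rw [psiW_zero d hd0, zero_smul]
  · refine ⟨‖z‖ ^ d, pow_nonneg (norm_nonneg _) _, psiW d (‖z‖⁻¹ • z), ?_, ?_⟩
    · refine subset_convexHull ℝ _ ⟨‖z‖⁻¹ • z, ?_, rfl⟩
      simp only [Metric.mem_sphere, dist_zero_right]
      rw [norm_smul]
      simp [norm_inv, inv_mul_cancel₀ (norm_ne_zero_iff.mpr hz)]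
    · rw [← psiW_smul, smul_inv_smul₀ (norm_ne_zero_iff.mpr hz)]

lemma coneK_compact : IsCompact (coneK d) := by
  apply (isCompact_sphere (0 : ℝ × ℝ) 1).image
  apply continuous_pi
  intro s
  exact (continuous_const.mul (continuous_fst.pow _)).mul (continuous_snd.pow _)

noncomputable def coneL : (Fin (d+1) → ℝ) → ℝ :=
  fun v => v ⟨0, Nat.succ_pos d⟩ + ∑ s : Fin (d+1), v s

lemma coneL_linear : IsLinearMap ℝ (coneL d) := by
  constructor
  · intro u v
    simp [coneL, Finset.sum_add_distrib]
    ring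
  · intro c v
    simp only [coneL, smul_eq_mul, Pi.smul_apply]
    rw [mul_add, Finset.mul_sum]

lemma coneL_psiW (z : ℝ × ℝ) : coneL d (psiW d z) = z.1 ^ d + (z.1 + z.2) ^ d := by
  have h1 : psiW d z ⟨0, Nat.succ_pos d⟩ = z.1 ^ d := by simp [psiW]
  have h2 : ∑ s : Fin (d+1), psiW d z s = (z.1 + z.2) ^ d := by
    have := psiW_eval d z 1
    simpa using this
  rw [coneL, h1, h2]

lemma coneL_pos (hd : Even d) (hd0 : 0 < d) (z : ℝ × ℝ) (hz : z ≠ 0) :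
    0 < coneL d (psiW d z) := by
  rw [coneL_psiW]
  have h1 : 0 ≤ z.1 ^ d := hd.pow_nonneg _
  have h2 : 0 ≤ (z.1 + z.2) ^ d := hd.pow_nonneg _
  rcases lt_or_eq_of_le h1 with h | h
  · linarith
  rcases lt_or_eq_of_le h2 with h' | h'
  · linarith
  exfalso
  apply hz
  have hz1 : z.1 = 0 := by
    have := pow_eq_zero_iff hd0.ne' |>.mp h.symm
    exact this
  have hz2 : z.1 + z.2 = 0 := pow_eq_zero_iff hd0.ne' |>.mp h'.symm
  have : z.2 = 0 := by linarith
  exact Prod.ext hz1 this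

lemma coneL_continuous : Continuous (coneL d) := by
  apply Continuous.add (continuous_apply _)
  exact continuous_finset_sum _ fun s _ => continuous_apply s

lemma zero_not_mem_convexHull_coneK (hd : Even d) (hd0 : 0 < d) :
    (0 : Fin (d+1) → ℝ) ∉ convexHull ℝ (coneK d) := by
  have hne : (coneK d).Nonempty := ⟨psiW d (1,0), ⟨(1,0), by simp [Prod.norm_def], rfl⟩⟩
  obtain ⟨v₀, hv₀, hmin'⟩ := (coneK_compact d).exists_isMinOn hne
    (coneL_continuous d).continuousOn
  have hmin : ∀ w ∈ coneK d, coneL d v₀ ≤ coneL d w := fun w hw => hmin' hw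
  have hε : 0 < coneL d v₀ := by
    obtain ⟨z, hz, rfl⟩ := hv₀
    apply coneL_pos d hd hd0
    intro h
    rw [h] at hz
    simp at hz
  have hsub : convexHull ℝ (coneK d) ⊆ {w | coneL d v₀ ≤ coneL d w} :=
    convexHull_min hmin (convex_halfSpace_ge (coneL_linear d) _)
  intro h0
  have h1 := hsub h0
  have h2 : coneL d 0 = 0 := by simp [coneL]
  rw [Set.mem_setOf_eq, h2] at h1
  linarith


lemma coneK_nonempty : (coneK d).Nonempty :=
  ⟨psiW d (1,0), ⟨(1,0), by simp [Prod.norm_def], rfl⟩⟩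

lemma zero_mem_coneS : (0 : Fin (d+1) → ℝ) ∈ coneS d := by
  obtain ⟨v, hv⟩ := coneK_nonempty d
  exact ⟨0, le_refl 0, v, subset_convexHull ℝ _ hv, (zero_smul ℝ v).symm⟩

lemma coneS_smul {r : ℝ} (hr : 0 ≤ r) {w : Fin (d+1) → ℝ} (hw : w ∈ coneS d) :
    r • w ∈ coneS d := by
  obtain ⟨r', hr', v, hv, rfl⟩ := hw
  exact ⟨r * r', mul_nonneg hr hr', v, hv, smul_smul r r' v⟩

lemma coneS_convex : Convex ℝ (coneS d) := by
  rintro - ⟨r1, hr1, v1, hv1, rfl⟩ - ⟨r2, hr2, v2, hv2, rfl⟩ θ1 θ2 hθ1 hθ2 hθ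
  rcases eq_or_lt_of_le (add_nonneg (mul_nonneg hθ1 hr1) (mul_nonneg hθ2 hr2)) with h0 | hpos
  · -- θ1 r1 + θ2 r2 = 0, so both products are 0
    have h1 : θ1 * r1 = 0 ∧ θ2 * r2 = 0 := by
      constructor <;> nlinarith [mul_nonneg hθ1 hr1, mul_nonneg hθ2 hr2]
    have : θ1 • r1 • v1 + θ2 • r2 • v2 = 0 := by
      rw [smul_smul, smul_smul, h1.1, h1.2, zero_smul, zero_smul, add_zero]
    rw [this]
    exact zero_mem_coneS d
  · set R := θ1 * r1 + θ2 * r2 with hR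
    refine ⟨R, le_of_lt hpos, (θ1 * r1 / R) • v1 + (θ2 * r2 / R) • v2, ?_, ?_⟩
    · apply (convex_convexHull ℝ (coneK d)) hv1 hv2
        (div_nonneg (mul_nonneg hθ1 hr1) hpos.le)
        (div_nonneg (mul_nonneg hθ2 hr2) hpos.le)
      field_simp
      exact hR.symm
    · rw [smul_add, smul_smul, smul_smul, smul_smul, smul_smul]
      congr 1 <;> congr 1 <;> field_simp
lemma coneS_isClosed (hd : Even d) (hd0 : 0 < d) : IsClosed (coneS d) := by
  have hC : IsCompact (convexHull ℝ (coneK d)) := isCompact_convexHull' (coneK_compact d)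
  have hC0 : (0 : Fin (d+1) → ℝ) ∉ convexHull ℝ (coneK d) :=
    zero_not_mem_convexHull_coneK d hd hd0
  apply IsSeqClosed.isClosed
  intro x p hx hxp
  choose r hr v hv hxe using hx
  obtain ⟨vb, hvbC, φ, hφ, hvlim⟩ := hC.tendsto_subseq hv
  have hvb0 : ‖vb‖ ≠ 0 := norm_ne_zero_iff.mpr (fun h => hC0 (h ▸ hvbC))
  have hvn0 : ∀ m, ‖v (φ m)‖ ≠ 0 :=
    fun m => norm_ne_zero_iff.mpr (fun h => hC0 (h ▸ hv (φ m)))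
  have hrφ : ∀ m, r (φ m) = ‖x (φ m)‖ / ‖v (φ m)‖ := by
    intro m
    rw [hxe (φ m), norm_smul, Real.norm_eq_abs, abs_of_nonneg (hr (φ m)),
      mul_div_assoc, div_self (hvn0 m), mul_one]
  have hxn : Filter.Tendsto (fun m => ‖x (φ m)‖) Filter.atTop (nhds ‖p‖) :=
    ((hxp.comp hφ.tendsto_atTop).norm)
  have hvn : Filter.Tendsto (fun m => ‖v (φ m)‖) Filter.atTop (nhds ‖vb‖) := hvlim.norm
  have hrlim : Filter.Tendsto (fun m => r (φ m)) Filter.atTop (nhds (‖p‖ / ‖vb‖)) := by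
    have heq : (fun m => r (φ m)) = fun m => ‖x (φ m)‖ / ‖v (φ m)‖ := funext hrφ
    rw [heq]
    exact hxn.div hvn hvb0
  have hslim : Filter.Tendsto (fun m => r (φ m) • v (φ m)) Filter.atTop
      (nhds ((‖p‖ / ‖vb‖) • vb)) := hrlim.smul hvlim
  have : p = (‖p‖ / ‖vb‖) • vb := by
    apply tendsto_nhds_unique _ hslim
    have : (fun m => r (φ m) • v (φ m)) = x ∘ φ := by
      funext m
      exact (hxe (φ m)).symm
    rw [this]
    exact hxp.comp hφ.tendsto_atTop
  exact ⟨‖p‖ / ‖vb‖, div_nonneg (norm_nonneg _) (norm_nonneg _), vb, hvbC, this⟩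

lemma coneS_repr {w : Fin (d+1) → ℝ} (hw : w ∈ coneS d) :
    ∃ (m : ℕ) (c : Fin m → ℝ) (zz : Fin m → ℝ × ℝ),
      (∀ l, 0 ≤ c l) ∧ w = ∑ l, c l • psiW d (zz l) := by
  classical
  obtain ⟨r, hr, v, hv, rfl⟩ := hw
  rw [mem_convexHull_iff_exists_fintype] at hv
  obtain ⟨ι, hfin, wt, zf, hw0, hw1, hzK, hsum⟩ := hv
  haveI := hfin
  obtain rfl : hfin = ‹Fintype ι› := Subsingleton.elim _ _
  have hchoice : ∀ i : ι, ∃ z : ℝ × ℝ, psiW d z = zf i := by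
    intro i
    obtain ⟨z, _, hz⟩ := hzK i
    exact ⟨z, hz⟩
  choose zz' hzz' using hchoice
  set e := Fintype.equivFin ι with he
  refine ⟨Fintype.card ι, fun l => r * wt (e.symm l), fun l => zz' (e.symm l),
    fun l => mul_nonneg hr (hw0 _), ?_⟩
  have : ∑ l : Fin (Fintype.card ι), (r * wt (e.symm l)) • psiW d (zz' (e.symm l))
      = ∑ i : ι, (r * wt i) • psiW d (zz' i) :=
    Equiv.sum_comp e.symm (fun i => (r * wt i) • psiW d (zz' i))
  rw [this]
  have : ∑ i : ι, (r * wt i) • psiW d (zz' i) = r • ∑ i : ι, wt i • zf i := by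
    rw [Finset.smul_sum]
    apply Finset.sum_congr rfl
    intro i _
    rw [hzz', smul_smul]
  rw [this, hsum]


end Cone

lemma integrable_poly_mul (n d : ℕ) (ρ : (Fin n → ℝ) → ℝ)
    (hmom : ∀ α : Fin n → ℕ, (∑ i, α i) ≤ d →
      Integrable (fun y : Fin n → ℝ => (∏ i, y i ^ α i) * ρ y))
    (q : MvPolynomial (Fin n) ℝ) (hq : q.totalDegree ≤ d) :
    Integrable (fun y : Fin n → ℝ => MvPolynomial.eval y q * ρ y) := by
  classical
  have heq : (fun y : Fin n → ℝ => MvPolynomial.eval y q * ρ y)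
      = fun y => ∑ α ∈ q.support, MvPolynomial.coeff α q * ((∏ i, y i ^ α i) * ρ y) := by
    funext y
    rw [MvPolynomial.eval_eq', Finset.sum_mul]
    apply Finset.sum_congr rfl
    intro α _
    ring
  rw [heq]
  apply integrable_finset_sum
  intro α hα
  apply Integrable.const_mul
  apply hmom
  have h1 : ∑ i, α i = α.sum fun _ e => e := by
    rw [Finsupp.sum_fintype]
    simp
  rw [h1]
  exact le_trans (MvPolynomial.le_totalDegree hα) hq

lemma integrable_affine_pow (n d : ℕ) (ρ : (Fin n → ℝ) → ℝ)
    (hmom : ∀ α : Fin n → ℕ, (∑ i, α i) ≤ d →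
      Integrable (fun y : Fin n → ℝ => (∏ i, y i ^ α i) * ρ y))
    (c : ℝ) (l : Fin n → ℝ) (e : ℕ) (he : e ≤ d) :
    Integrable (fun y : Fin n → ℝ => (c + ∑ j, l j * y j) ^ e * ρ y) := by
  classical
  set q : MvPolynomial (Fin n) ℝ :=
    (MvPolynomial.C c + ∑ j, MvPolynomial.C (l j) * MvPolynomial.X j) ^ e with hqdef
  have heval : ∀ y : Fin n → ℝ, MvPolynomial.eval y q = (c + ∑ j, l j * y j) ^ e := by
    intro y
    simp [hqdef, map_pow, map_add, map_sum]
  have hdeg : q.totalDegree ≤ d := by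
    calc q.totalDegree ≤ e * (MvPolynomial.C c
        + ∑ j, MvPolynomial.C (l j) * MvPolynomial.X j).totalDegree :=
          MvPolynomial.totalDegree_pow _ _
    _ ≤ e * 1 := by
        apply Nat.mul_le_mul_left
        apply le_trans (MvPolynomial.totalDegree_add _ _)
        apply max_le
        · simp [MvPolynomial.totalDegree_C]
        · apply le_trans (MvPolynomial.totalDegree_finset_sum _ _)
          apply Finset.sup_le
          intro j _
          apply le_trans (MvPolynomial.totalDegree_mul _ _)
          simp [MvPolynomial.totalDegree_C, MvPolynomial.totalDegree_X]
    _ ≤ d := by omega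
  have := integrable_poly_mul n d ρ hmom q hdeg
  apply this.congr
  filter_upwards with y
  rw [heval]

lemma waring_key (n d : ℕ) (hd : Even d) (hd0 : 0 < d)
    (ρ : (Fin n → ℝ) → ℝ) (hρmeas : Measurable ρ) (hρnonneg : ∀ y, 0 ≤ ρ y)
    (hmom : ∀ α : Fin n → ℕ, (∑ i, α i) ≤ d →
      Integrable (fun y : Fin n → ℝ => (∏ i, y i ^ α i) * ρ y))
    (a : ℝ) (b : Fin n → ℝ) :
    ∃ (m : ℕ) (c : Fin m → ℝ) (α β : Fin m → ℝ), (∀ l, 0 ≤ c l) ∧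
      ∀ t : ℝ, (∫ y : Fin n → ℝ, ((a + ∑ j, b j * y j) + t) ^ d * ρ y)
        = ∑ l, c l * (α l + β l * t) ^ d := by
  classical
  set A : (Fin n → ℝ) → ℝ := fun y => a + ∑ j, b j * y j with hA
  set ν : Measure (Fin n → ℝ) :=
    volume.withDensity (fun y => ((ρ y).toNNReal : ENNReal)) with hν
  have hdens_meas : Measurable (fun y => ((ρ y).toNNReal : ENNReal)) :=
    hρmeas.real_toNNReal.coe_nnreal_ennreal
  have hρint : Integrable ρ (volume : Measure (Fin n → ℝ)) := by
    have := hmom (fun _ => 0) (by simp)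
    simpa using this
  haveI : IsFiniteMeasure ν := by
    constructor
    rw [hν, withDensity_apply _ MeasurableSet.univ, setLIntegral_univ]
    have h := hρint.lintegral_lt_top
    have heq : ∀ y, ((ρ y).toNNReal : ENNReal) = ENNReal.ofReal (ρ y) := fun y => rfl
    simpa [heq] using h
  set f : (Fin n → ℝ) → (Fin (d+1) → ℝ) := fun y => psiW d (A y, 1) with hf
  -- integrability of coordinates w.r.t. volume with density ρ
  have hcoordvol : ∀ s : Fin (d+1),
      Integrable (fun y => f y s * ρ y) (volume : Measure (Fin n → ℝ)) := by
    intro s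
    have : (fun y => f y s * ρ y)
        = fun y => (d.choose s) * ((A y ^ (d - (s:ℕ)) * ρ y)) := by
      funext y
      simp only [hf, psiW, one_pow, mul_one]
      ring
    rw [this]
    apply Integrable.const_mul
    have := integrable_affine_pow n d ρ hmom a b (d - (s:ℕ)) (by omega)
    exact this
  have hcoord : ∀ s : Fin (d+1), Integrable (fun y => f y s) ν := by
    intro s
    rw [hν, integrable_withDensity_iff hdens_meas (by
      filter_upwards with y; exact ENNReal.coe_lt_top)]
    have heq : (fun y => f y s * (((ρ y).toNNReal : ENNReal)).toReal)
        = fun y => f y s * ρ y := by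
      funext y
      congr 1
      simp [Real.coe_toNNReal _ (hρnonneg y)]
    rw [heq]
    exact hcoordvol s
  have hfint : Integrable f ν := by
    have hrepr : f = fun y => ∑ s : Fin (d+1), (f y s) • (Pi.single s (1:ℝ) : Fin (d+1) → ℝ) := by
      funext y
      funext s'
      rw [Finset.sum_apply]
      simp [Pi.single_apply]
    rw [hrepr]
    apply integrable_finset_sum
    intro s _
    exact (hcoord s).smul_const _
  -- membership of the integral in the cone
  have hmemS : (∫ y, f y ∂ν) ∈ coneS d := by
    rcases eq_or_ne ν 0 with h0 | hne
    · rw [h0, integral_zero_measure]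
      exact zero_mem_coneS d
    · haveI : NeZero ν := ⟨hne⟩
      have havg := (coneS_convex d).average_mem (coneS_isClosed d hd hd0)
        (Filter.Eventually.of_forall fun y => psiW_mem_coneS d hd0 (A y, 1)) hfint
      rw [average_eq] at havg
      have hT : (ν Set.univ).toReal ≠ 0 := by
        have h1 : ν Set.univ ≠ 0 := MeasureTheory.Measure.measure_univ_ne_zero.mpr hne
        have h2 : ν Set.univ ≠ ⊤ := measure_ne_top ν Set.univ
        simp [ENNReal.toReal_eq_zero_iff, h1, h2]
      have : (∫ y, f y ∂ν) = (ν Set.univ).toReal • ((ν Set.univ).toReal⁻¹ • ∫ y, f y ∂ν) := by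
        rw [smul_smul, mul_inv_cancel₀ hT, one_smul]
      rw [this]
      exact coneS_smul d ENNReal.toReal_nonneg havg
  obtain ⟨m, c, zz, hc, hwrepr⟩ := coneS_repr d hmemS
  refine ⟨m, c, fun l => (zz l).1, fun l => (zz l).2, hc, ?_⟩
  intro t
  -- step 1: replace ρ-weighted volume integral by ν-integral
  have step1 : (∫ y : Fin n → ℝ, (A y + t) ^ d * ρ y)
      = ∫ y, (A y + t) ^ d ∂ν := by
    rw [hν]
    rw [integral_withDensity_eq_integral_smul hρmeas.real_toNNReal]
    apply integral_congr_ae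
    filter_upwards with y
    rw [NNReal.smul_def, Real.coe_toNNReal _ (hρnonneg y), smul_eq_mul]
    ring
  -- step 2: expand and use linearity
  have step2 : (∫ y, (A y + t) ^ d ∂ν) = ∑ s : Fin (d+1), (∫ y, f y s ∂ν) * t ^ (s:ℕ) := by
    have hpt : ∀ y, (A y + t) ^ d = ∑ s : Fin (d+1), f y s * t ^ (s:ℕ) := by
      intro y
      rw [hf]
      have := psiW_eval d (A y, 1) t
      simpa using this.symm
    calc (∫ y, (A y + t) ^ d ∂ν) = ∫ y, ∑ s : Fin (d+1), f y s * t ^ (s:ℕ) ∂ν :=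
          integral_congr_ae (Filter.Eventually.of_forall hpt)
      _ = ∑ s : Fin (d+1), ∫ y, f y s * t ^ (s:ℕ) ∂ν :=
          integral_finset_sum _ (fun s _ => (hcoord s).mul_const _)
      _ = ∑ s : Fin (d+1), (∫ y, f y s ∂ν) * t ^ (s:ℕ) := by
          apply Finset.sum_congr rfl
          intro s _
          rw [integral_mul_const]
  -- step 3: coordinates of the vector integral
  have step3 : ∀ s : Fin (d+1), (∫ y, f y s ∂ν) = (∫ y, f y ∂ν) s := by
    intro s
    exact (ContinuousLinearMap.proj (R := ℝ) (φ := fun _ : Fin (d+1) => ℝ) s).integral_comp_comm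
      hfint
  rw [step1, step2]
  calc ∑ s : Fin (d+1), (∫ y, f y s ∂ν) * t ^ (s:ℕ)
      = ∑ s : Fin (d+1), (∫ y, f y ∂ν) s * t ^ (s:ℕ) := by
        apply Finset.sum_congr rfl
        intro s _
        rw [step3]
    _ = ∑ s : Fin (d+1), (∑ l, c l • psiW d (zz l)) s * t ^ (s:ℕ) := by rw [← hwrepr]
    _ = ∑ s : Fin (d+1), (∑ l, c l * psiW d (zz l) s) * t ^ (s:ℕ) := by
        apply Finset.sum_congr rfl
        intro s _
        rw [Finset.sum_apply]
        simp
    _ = ∑ s : Fin (d+1), ∑ l, c l * psiW d (zz l) s * t ^ (s:ℕ) := by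
        apply Finset.sum_congr rfl
        intro s _
        rw [Finset.sum_mul]
    _ = ∑ l, ∑ s : Fin (d+1), c l * psiW d (zz l) s * t ^ (s:ℕ) := Finset.sum_comm
    _ = ∑ l, c l * ∑ s : Fin (d+1), psiW d (zz l) s * t ^ (s:ℕ) := by
        apply Finset.sum_congr rfl
        intro l _
        rw [Finset.mul_sum]
        apply Finset.sum_congr rfl
        intro s _
        ring
    _ = ∑ l, c l * ((zz l).1 + (zz l).2 * t) ^ d := by
        apply Finset.sum_congr rfl
        intro l _
        rw [psiW_eval]

theorem waring_conv_kernel (n : ℕ) (d : ℕ) (hd : Even d) (hd0 : 0 < d)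
    (ρ : (Fin n → ℝ) → ℝ) (hρmeas : Measurable ρ) (hρnonneg : ∀ y, 0 ≤ ρ y)
    (hmom : ∀ α : Fin n → ℕ, (∑ i, α i) ≤ d →
      Integrable (fun y : Fin n → ℝ => (∏ i, y i ^ α i) * ρ y))
    (k : ℕ) (a : Fin k → ℝ) (b : Fin k → Fin n → ℝ)
    (p : (Fin n → ℝ) → ℝ)
    (hp : ∀ x : Fin n → ℝ, p x = ∑ i, (a i + ∑ j, b i j * x j) ^ d) :
    ∃ (m : ℕ) (c : Fin m → ℝ) (a' : Fin m → ℝ) (b' : Fin m → Fin n → ℝ),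
      (∀ i, 0 ≤ c i) ∧
      ∀ x : Fin n → ℝ,
        (∫ y : Fin n → ℝ, p (x - y) * ρ y)
          = ∑ i, c i * (a' i + ∑ j, b' i j * x j) ^ d := by
  classical
  -- apply the key lemma in each direction
  have hkey : ∀ i : Fin k, ∃ (m : ℕ) (c : Fin m → ℝ) (α β : Fin m → ℝ), (∀ l, 0 ≤ c l) ∧
      ∀ t : ℝ, (∫ y : Fin n → ℝ, ((a i + ∑ j, (-(b i j)) * y j) + t) ^ d * ρ y)
        = ∑ l, c l * (α l + β l * t) ^ d :=
    fun i => waring_key n d hd hd0 ρ hρmeas hρnonneg hmom (a i) (fun j => -(b i j))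
  choose m c α β hc hrep using hkey
  set ι := (i : Fin k) × Fin (m i) with hι
  set M := Fintype.card ι with hM
  set e : Fin M ≃ ι := (Fintype.equivFin ι).symm with he
  refine ⟨M, fun l => c (e l).1 (e l).2, fun l => α (e l).1 (e l).2,
    fun l j => β (e l).1 (e l).2 * b (e l).1 j, fun l => hc _ _, ?_⟩
  intro x
  -- pointwise rewriting of the integrand
  have hpt : ∀ y : Fin n → ℝ, p (x - y) * ρ y
      = ∑ i : Fin k, ((a i + ∑ j, (-(b i j)) * y j) + ∑ j, b i j * x j) ^ d * ρ y := by
    intro y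
    rw [hp (x - y), Finset.sum_mul]
    apply Finset.sum_congr rfl
    intro i _
    congr 1
    have : ∀ j, b i j * (x - y) j = (-(b i j)) * y j + b i j * x j := by
      intro j
      simp [Pi.sub_apply]
      ring
    rw [Finset.sum_congr rfl (fun j _ => this j), Finset.sum_add_distrib]
    ring
  have hint : ∀ i : Fin k, Integrable
      (fun y : Fin n → ℝ => ((a i + ∑ j, (-(b i j)) * y j) + ∑ j, b i j * x j) ^ d * ρ y)
        (volume : Measure (Fin n → ℝ)) := by
    intro i
    have := integrable_affine_pow n d ρ hmom ((a i + ∑ j, b i j * x j)) (fun j => -(b i j)) d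
      (le_refl d)
    apply this.congr
    filter_upwards with y
    ring_nf
  calc (∫ y : Fin n → ℝ, p (x - y) * ρ y)
      = ∫ y : Fin n → ℝ, ∑ i : Fin k,
          ((a i + ∑ j, (-(b i j)) * y j) + ∑ j, b i j * x j) ^ d * ρ y :=
        integral_congr_ae (Filter.Eventually.of_forall hpt)
    _ = ∑ i : Fin k, ∫ y : Fin n → ℝ,
          ((a i + ∑ j, (-(b i j)) * y j) + ∑ j, b i j * x j) ^ d * ρ y :=
        integral_finset_sum _ (fun i _ => hint i)
    _ = ∑ i : Fin k, ∑ l, c i l * (α i l + β i l * ∑ j, b i j * x j) ^ d := by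
        apply Finset.sum_congr rfl
        intro i _
        exact hrep i (∑ j, b i j * x j)
    _ = ∑ σ : ι, c σ.1 σ.2 * (α σ.1 σ.2 + β σ.1 σ.2 * ∑ j, b σ.1 j * x j) ^ d := by
        rw [Finset.sum_sigma', Finset.univ_sigma_univ]
    _ = ∑ l : Fin M, c (e l).1 (e l).2
          * (α (e l).1 (e l).2 + β (e l).1 (e l).2 * ∑ j, b (e l).1 j * x j) ^ d :=
        (Equiv.sum_comp e (fun σ : ι =>
          c σ.1 σ.2 * (α σ.1 σ.2 + β σ.1 σ.2 * ∑ j, b σ.1 j * x j) ^ d)).symm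
    _ = ∑ l : Fin M, c (e l).1 (e l).2
          * (α (e l).1 (e l).2 + ∑ j, (β (e l).1 (e l).2 * b (e l).1 j) * x j) ^ d := by
        apply Finset.sum_congr rfl
        intro l _
        congr 2
        rw [Finset.mul_sum]
        congr 1
        apply Finset.sum_congr rfl
        intro j _
        ring
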